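/- Let Z be an abelian group, Δ ⊆ Z a finite set, F ⊆ Z a finite symmetric set (F = −F), and x ∈ Z. Then Σ_{b∈Δ} |Δ[x] ∩ (b+F)|² ≤ Σ_{c∈Δ[x]} √( |F| · E(Δ[x], c+F) ). -/

import Mathlib

open Finset

/-- The asymmetric additive energy `E(A,B)`: the number of quadruples
`(a,b,a',b') ∈ A×B×A×B` with `a − b = a' − b'`. -/
def Easym {Z : Type*} [AddCommGroup Z] [DecidableEq Z] (A B : Finset Z) : ℕ :=
  ((A ×ˢ B ×ˢ A ×ˢ B).filter fun p => p.1 - p.2.1 = p.2.2.1 - p.2.2.2).card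

/-- For a symmetric set `F`,
`Σ_{b∈Δ} |Δ[x] ∩ (b+F)|² ≤ Σ_{c∈Δ[x]} √(|F|·E(Δ[x], c+F))`, where `Δ[x] = Δ ∩ (x+Δ)`. -/
theorem sum_sq_inter_le_sum_sqrt {Z : Type*} [AddCommGroup Z] [DecidableEq Z]
    (Δ : Finset Z) (F : Finset Z) (hF : ∀ y : Z, y ∈ F ↔ -y ∈ F) (x : Z) :
    ∑ b ∈ Δ, (((Δ ∩ Δ.image (x + ·)) ∩ F.image (b + ·)).card : ℝ) ^ 2
      ≤ ∑ c ∈ Δ ∩ Δ.image (x + ·),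
          Real.sqrt ((F.card : ℝ) *
            (Easym (Δ ∩ Δ.image (x + ·)) (F.image (c + ·)) : ℝ)) := by
  set A := Δ ∩ Δ.image (x + ·) with hA
  have hmem : ∀ (b a : Z), a ∈ F.image (b + ·) ↔ a - b ∈ F := by
    intro b a
    simp only [mem_image]
    constructor
    · rintro ⟨f, hf, rfl⟩; simpa using hf
    · intro h; exact ⟨a - b, h, by abel⟩
  have hsym : ∀ b c : Z, (c ∈ F.image (b + ·)) ↔ (b ∈ F.image (c + ·)) := by
    intro b c
    rw [hmem, hmem]
    constructor <;> intro h
    · have := (hF _).1 h; simpa [neg_sub] using this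
    · have := (hF _).1 h; simpa [neg_sub] using this
  have hcard : ∀ b : Z, (A ∩ F.image (b + ·)) = A.filter (fun a => a - b ∈ F) := by
    intro b; ext a; simp [mem_inter, mem_filter, hmem, and_comm, sub_eq_neg_add]
  -- key per-c bound
  have key : ∀ c : Z,
      (↑(∑ b ∈ F.image (c + ·), (A ∩ F.image (b + ·)).card) : ℝ)
        ≤ Real.sqrt ((F.card : ℝ) * (Easym A (F.image (c + ·)) : ℝ)) := by
    intro c
    set B := F.image (c + ·) with hB
    set P := A ×ˢ B with hP
    set r : Z → ℕ := fun d => (P.filter fun p => p.1 - p.2 = d).card with hr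
    set T := P.filter (fun p => p.1 - p.2 ∈ F) with hT
    have hN : ∑ b ∈ B, (A ∩ F.image (b + ·)).card = T.card := by
      rw [hT, hP, card_filter, Finset.sum_product, Finset.sum_comm]
      refine Finset.sum_congr rfl fun b hb => ?_
      rw [hcard b, card_filter]
    have hTF : T.card = ∑ f ∈ F, r f := by
      rw [Finset.card_eq_sum_card_fiberwise
        (s := T) (f := fun p : Z × Z => p.1 - p.2) (t := F) (fun p hp => (mem_filter.1 hp).2)]
      refine Finset.sum_congr rfl fun f hf => ?_
      congr 1
      ext p
      simp only [hT, mem_filter]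
      constructor
      · rintro ⟨⟨h1, h2⟩, h3⟩; exact ⟨h1, h3⟩
      · rintro ⟨h1, h2⟩; exact ⟨⟨h1, h2 ▸ hf⟩, h2⟩
    have hE : ∑ f ∈ F, r f ^ 2 ≤ Easym A B := by
      set Q := (P ×ˢ P).filter
        (fun q : (Z × Z) × (Z × Z) => q.1.1 - q.1.2 = q.2.1 - q.2.2) with hQ
      have hcardQ : Easym A B = Q.card := by
        unfold Easym
        apply Finset.card_nbij'
          (i := fun q : Z × Z × Z × Z => ((q.1, q.2.1), (q.2.2.1, q.2.2.2)))
          (j := fun q : (Z × Z) × (Z × Z) => (q.1.1, q.1.2, q.2.1, q.2.2))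
        · rintro ⟨a, b, a', b'⟩ hq
          simp only [hQ, hP, mem_coe, mem_filter, mem_product] at hq ⊢
          exact ⟨⟨⟨hq.1.1, hq.1.2.1⟩, hq.1.2.2.1, hq.1.2.2.2⟩, hq.2⟩
        · rintro ⟨⟨a, b⟩, a', b'⟩ hq
          simp only [hQ, hP, mem_coe, mem_filter, mem_product] at hq ⊢
          exact ⟨⟨hq.1.1.1, hq.1.1.2, hq.1.2.1, hq.1.2.2⟩, hq.2⟩
        · rintro ⟨a, b, a', b'⟩ _; rfl
        · rintro ⟨⟨a, b⟩, a', b'⟩ _; rfl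
      set D := P.image (fun p : Z × Z => p.1 - p.2) with hD
      have hQsum : Q.card = ∑ d ∈ D, r d ^ 2 := by
        rw [Finset.card_eq_sum_card_fiberwise
          (f := fun q : (Z × Z) × (Z × Z) => q.1.1 - q.1.2) (t := D)
          (fun q hq => mem_image_of_mem _ (mem_product.1 (mem_filter.1 hq).1).1)]
        refine Finset.sum_congr rfl fun d hd => ?_
        have heq : Q.filter (fun q : (Z × Z) × (Z × Z) => q.1.1 - q.1.2 = d)
            = (P.filter (fun p : Z × Z => p.1 - p.2 = d))
              ×ˢ (P.filter (fun p : Z × Z => p.1 - p.2 = d)) := by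
          ext q
          simp only [hQ, mem_filter, mem_product]
          constructor
          · rintro ⟨⟨⟨h1, h2⟩, h3⟩, h4⟩; exact ⟨⟨h1, h4⟩, h2, h3 ▸ h4⟩
          · rintro ⟨⟨h1, h4⟩, h2, h5⟩; exact ⟨⟨⟨h1, h2⟩, h4.trans h5.symm⟩, h4⟩
        rw [heq, card_product, hr, sq]
      calc ∑ f ∈ F, r f ^ 2 ≤ ∑ f ∈ F ∪ D, r f ^ 2 :=
            Finset.sum_le_sum_of_subset Finset.subset_union_left
        _ = ∑ d ∈ D, r d ^ 2 := by
            refine (Finset.sum_subset Finset.subset_union_right fun d _ hd => ?_).symm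
            have hz : P.filter (fun p : Z × Z => p.1 - p.2 = d) = ∅ := by
              rw [Finset.filter_eq_empty_iff]
              intro p hp h
              exact hd (mem_image.2 ⟨p, hp, h⟩)
            simp [hr, hz]
        _ = Q.card := hQsum.symm
        _ = Easym A B := hcardQ.symm
    -- Cauchy-Schwarz
    have hCS : (↑(∑ f ∈ F, r f) : ℝ) ^ 2 ≤ (F.card : ℝ) * (Easym A B : ℝ) := by
      push_cast
      calc (∑ f ∈ F, (r f : ℝ)) ^ 2 ≤ (F.card : ℝ) * ∑ f ∈ F, (r f : ℝ) ^ 2 :=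
            sq_sum_le_card_mul_sum_sq
        _ ≤ (F.card : ℝ) * (Easym A B : ℝ) := by
            refine mul_le_mul_of_nonneg_left ?_ (Nat.cast_nonneg _)
            have := hE
            calc (∑ f ∈ F, (r f : ℝ) ^ 2) = ((∑ f ∈ F, r f ^ 2 : ℕ) : ℝ) := by push_cast; ring_nf
              _ ≤ ((Easym A B : ℕ) : ℝ) := by exact_mod_cast hE
    rw [hN, hTF]
    exact Real.le_sqrt_of_sq_le hCS
  -- main chain
  calc ∑ b ∈ Δ, ((A ∩ F.image (b + ·)).card : ℝ) ^ 2
      = ∑ b ∈ Δ, ∑ c ∈ A,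
          (if b ∈ F.image (c + ·) then ((A ∩ F.image (b + ·)).card : ℝ) else 0) := by
        refine Finset.sum_congr rfl fun b hb => ?_
        rw [sq]
        have h1 : ((A ∩ F.image (b + ·)).card : ℝ)
            = ∑ c ∈ A, (if c ∈ F.image (b + ·) then (1 : ℝ) else 0) := by
          rw [← Finset.filter_mem_eq_inter, card_filter]
          push_cast
          rfl
        rw [h1, Finset.sum_mul]
        refine Finset.sum_congr rfl fun c hc => ?_
        rw [ite_mul, one_mul, zero_mul]
        simp only [hsym b c]
    _ = ∑ c ∈ A, ∑ b ∈ Δ,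
          (if b ∈ F.image (c + ·) then ((A ∩ F.image (b + ·)).card : ℝ) else 0) :=
        Finset.sum_comm
    _ ≤ ∑ c ∈ A, Real.sqrt ((F.card : ℝ) * (Easym A (F.image (c + ·)) : ℝ)) := by
        refine Finset.sum_le_sum fun c hc => ?_
        calc ∑ b ∈ Δ, (if b ∈ F.image (c + ·) then ((A ∩ F.image (b + ·)).card : ℝ) else 0)
            = ∑ b ∈ Δ.filter (· ∈ F.image (c + ·)), ((A ∩ F.image (b + ·)).card : ℝ) :=
              (Finset.sum_filter _ _).symm
          _ ≤ ∑ b ∈ F.image (c + ·), ((A ∩ F.image (b + ·)).card : ℝ) :=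
              Finset.sum_le_sum_of_subset_of_nonneg
                (fun b hb => (mem_filter.1 hb).2) (fun _ _ _ => Nat.cast_nonneg _)
          _ ≤ Real.sqrt ((F.card : ℝ) * (Easym A (F.image (c + ·)) : ℝ)) := by
              have := key c
              push_cast at this
              exact this
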